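/- Let K and L be regular languages with state complexities m and n. Then the state complexity of Kᴿ ⊕ Lᴿ is at most 2^{m+n−1}. -/
import Mathlib


namespace SCPaper

/-- Reversal of a language. -/
def rev {α : Type} (L : Language α) : Language α := {w | w.reverse ∈ L}

/-- Union of two languages. -/
def lunion {α : Type} (K L : Language α) : Language α := {w | w ∈ K ∨ w ∈ L}

/-- Intersection of two languages. -/
def linter {α : Type} (K L : Language α) : Language α := {w | w ∈ K ∧ w ∈ L}

/-- Difference of two languages. -/
def ldiff {α : Type} (K L : Language α) : Language α := {w | w ∈ K ∧ w ∉ L}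

/-- Symmetric difference of two languages. -/
def lsymm {α : Type} (K L : Language α) : Language α := lunion (ldiff K L) (ldiff L K)

/-- Sizes (numbers of states) of complete DFAs recognizing `L`. -/
def complexitySet {α : Type} (L : Language α) : Set ℕ :=
  {n | ∃ M : DFA α (Fin n), M.accepts = L}

/-- A language is regular if it is recognized by some finite DFA. -/
def Regular {α : Type} (L : Language α) : Prop := (complexitySet L).Nonempty

/-- State complexity: the number of states of a minimal DFA for `L`. -/
noncomputable def sc {α : Type} (L : Language α) : ℕ := sInf (complexitySet L)

/-- The cyclic permutation (0,1,…,n−1). -/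
def cyc (n : ℕ) (i : Fin n) : Fin n :=
  ⟨(i.val + 1) % n, Nat.mod_lt _ (Nat.lt_of_le_of_lt (Nat.zero_le _) i.isLt)⟩

/-- The transposition (0,1). -/
def tp01 (n : ℕ) (i : Fin n) : Fin n :=
  if i.val = 0 then ⟨1 % n, Nat.mod_lt _ (Nat.lt_of_le_of_lt (Nat.zero_le _) i.isLt)⟩
  else if i.val = 1 then ⟨0, Nat.lt_of_le_of_lt (Nat.zero_le _) i.isLt⟩
  else i

/-- The singular map sending n−1 to 0 and fixing everything else. -/
def sing (n : ℕ) (i : Fin n) : Fin n :=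
  if i.val = n - 1 then ⟨0, Nat.lt_of_le_of_lt (Nat.zero_le _) i.isLt⟩ else i

/-- The transposition (n−2, n−1). -/
def tpTop (n : ℕ) (i : Fin n) : Fin n :=
  if i.val = n - 1 then ⟨n - 2, by have := i.isLt; omega⟩
  else if i.val = n - 2 then ⟨n - 1, by have := i.isLt; omega⟩
  else i

/-- The singular map sending n−1 to n−2 and fixing everything else. -/
def singTop (n : ℕ) (i : Fin n) : Fin n :=
  if i.val = n - 1 then ⟨n - 2, by have := i.isLt; omega⟩ else i

/-- 𝒰ₙ(a,b,∅): binary alphabet, a = cycle (0,…,n−1), b = transposition (0,1),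
initial state 0, final state n−1. -/
def U2dfa (n : ℕ) (h : 0 < n) : DFA (Fin 2) (Fin n) where
  step := fun i x => if x = 0 then cyc n i else tp01 n i
  start := ⟨0, h⟩
  accept := {i | i.val = n - 1}

def U2 (n : ℕ) (h : 0 < n) : Language (Fin 2) := (U2dfa n h).accepts

/-- 𝒰ₙ(a,b,c): a = cycle, b = transposition (0,1), c = (n−1 ↦ 0). -/
def Udfa (n : ℕ) (h : 0 < n) : DFA (Fin 3) (Fin n) where
  step := fun i x => if x = 0 then cyc n i else if x = 1 then tp01 n i else sing n i
  start := ⟨0, h⟩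
  accept := {i | i.val = n - 1}

def U (n : ℕ) (h : 0 < n) : Language (Fin 3) := (Udfa n h).accepts

/-- 𝒰ₙ(a,b,c) with final state set {0}. -/
def U0dfa (n : ℕ) (h : 0 < n) : DFA (Fin 3) (Fin n) where
  step := fun i x => if x = 0 then cyc n i else if x = 1 then tp01 n i else sing n i
  start := ⟨0, h⟩
  accept := {i | i.val = 0}

def U0 (n : ℕ) (h : 0 < n) : Language (Fin 3) := (U0dfa n h).accepts

/-- 𝒰ₙ(a,b,c,d): a = cycle, b = transposition (0,1), c = (n−1 ↦ 0), d = identity. -/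
def U4dfa (n : ℕ) (h : 0 < n) : DFA (Fin 4) (Fin n) where
  step := fun i x =>
    if x = 0 then cyc n i else if x = 1 then tp01 n i else if x = 2 then sing n i else i
  start := ⟨0, h⟩
  accept := {i | i.val = n - 1}

def U4 (n : ℕ) (h : 0 < n) : Language (Fin 4) := (U4dfa n h).accepts

/-- 𝒰ₙ(d,c,b,a): d = cycle, c = transposition (0,1), b = (n−1 ↦ 0), a = identity. -/
def U4dcbaDfa (n : ℕ) (h : 0 < n) : DFA (Fin 4) (Fin n) where
  step := fun i x =>
    if x = 3 then cyc n i else if x = 2 then tp01 n i else if x = 1 then sing n i else i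
  start := ⟨0, h⟩
  accept := {i | i.val = n - 1}

def U4dcba (n : ℕ) (h : 0 < n) : Language (Fin 4) := (U4dcbaDfa n h).accepts

/-- 𝒱ₙ(a,b,c,d): a = cycle, b = transposition (n−2,n−1), c = (n−1 ↦ n−2), d = identity. -/
def Vdfa (n : ℕ) (h : 0 < n) : DFA (Fin 4) (Fin n) where
  step := fun i x =>
    if x = 0 then cyc n i else if x = 1 then tpTop n i else if x = 2 then singTop n i else i
  start := ⟨0, h⟩
  accept := {i | i.val = n - 1}

def V (n : ℕ) (h : 0 < n) : Language (Fin 4) := (Vdfa n h).accepts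

/-- 𝒱ₙ(d,c,b,a): d = cycle, c = transposition (n−2,n−1), b = (n−1 ↦ n−2), a = identity. -/
def VdcbaDfa (n : ℕ) (h : 0 < n) : DFA (Fin 4) (Fin n) where
  step := fun i x =>
    if x = 3 then cyc n i else if x = 2 then tpTop n i else if x = 1 then singTop n i else i
  start := ⟨0, h⟩
  accept := {i | i.val = n - 1}

def Vdcba (n : ℕ) (h : 0 < n) : Language (Fin 4) := (VdcbaDfa n h).accepts

/-- Direct product of two DFAs with a chosen set of final states. -/
def prodDFA {α σ₁ σ₂ : Type} (M : DFA α σ₁) (N : DFA α σ₂) (acc : Set (σ₁ × σ₂)) :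
    DFA α (σ₁ × σ₂) where
  step := fun p x => (M.step p.1 x, N.step p.2 x)
  start := (M.start, N.start)
  accept := acc


/-- Chinese-remainder style pairing k ↦ (k mod m, k mod n). -/
def toPair (m n : ℕ) (hm : 0 < m) (hn : 0 < n) (k : Fin (m * n)) : Fin m × Fin n :=
  (⟨k.val % m, Nat.mod_lt _ hm⟩, ⟨k.val % n, Nat.mod_lt _ hn⟩)

/-- Componentwise successor on the product of two cyclic automata. -/
def prodSucc (m n : ℕ) (p : Fin m × Fin n) : Fin m × Fin n := (cyc m p.1, cyc n p.2)

/-- One-letter subset transition of the reversed NFA of 𝒰ₙ(a,b,c). -/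
def rstep (n : ℕ) (h : 0 < n) (S : Set (Fin n)) (x : Fin 3) : Set (Fin n) :=
  {q | (Udfa n h).step q x ∈ S}

/-- Action of a word on subsets in the reversed NFA of 𝒰ₙ(a,b,c). -/
def rword (n : ℕ) (h : 0 < n) (S : Set (Fin n)) (w : List (Fin 3)) : Set (Fin n) :=
  w.foldl (rstep n h) S

end SCPaper

open SCPaper

open SCPaper

section Aux

open SCPaper

/-- Reversal DFA via Bool-valued subset construction. -/
noncomputable def revDFA {α σ : Type} (M : DFA α σ) : DFA α (σ → Bool) where
  step f x := fun q => f (M.step q x)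
  start := fun q => @decide (q ∈ M.accept) (Classical.propDecidable _)
  accept := {f | f M.start = true}

lemma revDFA_evalFrom {α σ : Type} (M : DFA α σ) (w : List α) (f : σ → Bool) (q : σ) :
    (revDFA M).evalFrom f w q = f (M.evalFrom q w.reverse) := by
  induction w generalizing f with
  | nil => rfl
  | cons x w ih =>
      show (revDFA M).evalFrom ((revDFA M).step f x) w q = _
      rw [ih]
      simp [revDFA, List.reverse_cons, DFA.evalFrom_append_singleton]

lemma revDFA_mem {α σ : Type} (M : DFA α σ) (w : List α) :
    w ∈ (revDFA M).accepts ↔ w.reverse ∈ M.accepts := by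
  rw [DFA.mem_accepts]
  show (revDFA M).evalFrom (revDFA M).start w M.start = true ↔ _
  rw [revDFA_evalFrom]
  simp [revDFA, DFA.mem_accepts, DFA.eval]

lemma prodDFA_evalFrom {α σ₁ σ₂ : Type} (M : DFA α σ₁) (N : DFA α σ₂)
    (acc : Set (σ₁ × σ₂)) (w : List α) (p : σ₁ × σ₂) :
    (prodDFA M N acc).evalFrom p w = (M.evalFrom p.1 w, N.evalFrom p.2 w) := by
  induction w generalizing p with
  | nil => rfl
  | cons x w ih =>
      show (prodDFA M N acc).evalFrom ((prodDFA M N acc).step p x) w = _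
      rw [ih]; rfl

/-- Transport a DFA along an equivalence of state types. -/
def reindexDFA {α σ τ : Type} (e : σ ≃ τ) (D : DFA α σ) : DFA α τ where
  step t x := e (D.step (e.symm t) x)
  start := e D.start
  accept := {t | e.symm t ∈ D.accept}

lemma reindexDFA_evalFrom {α σ τ : Type} (e : σ ≃ τ) (D : DFA α σ) (w : List α) (s : σ) :
    (reindexDFA e D).evalFrom (e s) w = e (D.evalFrom s w) := by
  induction w generalizing s with
  | nil => rfl
  | cons x w ih =>
      show (reindexDFA e D).evalFrom ((reindexDFA e D).step (e s) x) w = _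
      have : (reindexDFA e D).step (e s) x = e (D.step s x) := by
        simp [reindexDFA]
      rw [this, ih]; rfl

lemma reindexDFA_accepts {α σ τ : Type} (e : σ ≃ τ) (D : DFA α σ) :
    (reindexDFA e D).accepts = D.accepts := by
  ext w
  rw [DFA.mem_accepts, DFA.mem_accepts]
  show (reindexDFA e D).evalFrom (e D.start) w ∈ _ ↔ _
  rw [reindexDFA_evalFrom]
  simp only [reindexDFA, Set.mem_setOf_eq, Equiv.symm_apply_apply]
  rfl

section Quot

variable {α σ₁ σ₂ : Type} (M : DFA α σ₁) (N : DFA α σ₂)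

/-- The full product automaton for symmetric difference of reversals. -/
noncomputable def fullP : DFA α ((σ₁ → Bool) × (σ₂ → Bool)) :=
  prodDFA (revDFA M) (revDFA N) {p | p.1 M.start ≠ p.2 N.start}

/-- Componentwise complement. -/
def cpl (p : (σ₁ → Bool) × (σ₂ → Bool)) : (σ₁ → Bool) × (σ₂ → Bool) :=
  (fun q => !p.1 q, fun q => !p.2 q)

/-- Normalization: complement if the start bit is set. -/
def nrm (p : (σ₁ → Bool) × (σ₂ → Bool)) : (σ₁ → Bool) × (σ₂ → Bool) :=
  if p.1 M.start = true then cpl p else p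

lemma nrm_fst (p : (σ₁ → Bool) × (σ₂ → Bool)) : (nrm M p).1 M.start = false := by
  unfold nrm cpl
  cases h : p.1 M.start <;> simp [h]

lemma cpl_cpl (p : (σ₁ → Bool) × (σ₂ → Bool)) : cpl (cpl p) = p := by
  cases p; simp [cpl]

lemma nrm_cpl (p : (σ₁ → Bool) × (σ₂ → Bool)) : nrm M (cpl p) = nrm M p := by
  unfold nrm
  cases h : p.1 M.start <;> simp [cpl, h, cpl_cpl]

lemma fullP_step_cpl (p : (σ₁ → Bool) × (σ₂ → Bool)) (x : α) :
    (fullP M N).step (cpl p) x = cpl ((fullP M N).step p x) := rfl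

lemma nrm_step_nrm (p : (σ₁ → Bool) × (σ₂ → Bool)) (x : α) :
    nrm M ((fullP M N).step (nrm M p) x) = nrm M ((fullP M N).step p x) := by
  cases h : p.1 M.start with
  | false =>
      have : nrm M p = p := by simp [nrm, h]
      rw [this]
  | true =>
      have : nrm M p = cpl p := by simp [nrm, h]
      rw [this, fullP_step_cpl, nrm_cpl]

/-- The quotient automaton on normalized states. -/
noncomputable def quotD : DFA α {p : (σ₁ → Bool) × (σ₂ → Bool) // p.1 M.start = false} where
  step s x := ⟨nrm M ((fullP M N).step s.val x), nrm_fst M _⟩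
  start := ⟨nrm M (fullP M N).start, nrm_fst M _⟩
  accept := {s | s.val.2 N.start = true}

lemma nrm_accept (p : (σ₁ → Bool) × (σ₂ → Bool)) :
    (nrm M p).2 N.start = true ↔ p.1 M.start ≠ p.2 N.start := by
  unfold nrm cpl
  cases h1 : p.1 M.start <;> cases h2 : p.2 N.start <;> simp [h1, h2]

lemma quotD_evalFrom (w : List α) (p : (σ₁ → Bool) × (σ₂ → Bool)) :
    ((quotD M N).evalFrom ⟨nrm M p, nrm_fst M p⟩ w).val = nrm M ((fullP M N).evalFrom p w) := by
  induction w generalizing p with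
  | nil => rfl
  | cons x w ih =>
      show ((quotD M N).evalFrom ((quotD M N).step ⟨nrm M p, _⟩ x) w).val = _
      have hstep : (quotD M N).step ⟨nrm M p, nrm_fst M p⟩ x
          = ⟨nrm M ((fullP M N).step p x), nrm_fst M _⟩ :=
        Subtype.ext (nrm_step_nrm M N p x)
      rw [hstep, ih]
      rfl

lemma quotD_accepts : (quotD M N).accepts = (fullP M N).accepts := by
  ext w
  rw [DFA.mem_accepts, DFA.mem_accepts]
  show ((quotD M N).evalFrom (quotD M N).start w) ∈ _ ↔ _
  have h1 : ((quotD M N).evalFrom (quotD M N).start w).val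
      = nrm M ((fullP M N).evalFrom (fullP M N).start w) := quotD_evalFrom M N w _
  show ((quotD M N).evalFrom (quotD M N).start w).val.2 N.start = true ↔ _
  rw [h1, nrm_accept]
  rfl

end Quot

end Aux


theorem symmdiff_two_reversed_upper_bound {α : Type} (K L : Language α) (m n : ℕ)
    (hK : Regular K) (hL : Regular L) (hm : sc K = m) (hn : sc L = n) :
    sc (lsymm (rev K) (rev L)) ≤ 2 ^ (m + n - 1) := by
  classical
  have hKm : m ∈ complexitySet K := hm ▸ Nat.sInf_mem hK
  have hLn : n ∈ complexitySet L := hn ▸ Nat.sInf_mem hL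
  obtain ⟨M, hM⟩ := hKm
  obtain ⟨N, hN⟩ := hLn
  have hfull : (fullP M N).accepts = lsymm (rev K) (rev L) := by
    ext w
    rw [DFA.mem_accepts]
    have h1 : (fullP M N).eval w = ((revDFA M).eval w, (revDFA N).eval w) :=
      prodDFA_evalFrom _ _ _ w _
    show (fullP M N).eval w ∈ {p : (Fin m → Bool) × (Fin n → Bool) |
        p.1 M.start ≠ p.2 N.start} ↔ _
    rw [h1]
    have hA : ((revDFA M).eval w M.start = true) ↔ w ∈ rev K := by
      have h2 := revDFA_mem M w
      rw [hM] at h2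
      exact h2
    have hB : ((revDFA N).eval w N.start = true) ↔ w ∈ rev L := by
      have h2 := revDFA_mem N w
      rw [hN] at h2
      exact h2
    have hmemiff : w ∈ lsymm (rev K) (rev L) ↔
        ((w ∈ rev K ∧ w ∉ rev L) ∨ (w ∈ rev L ∧ w ∉ rev K)) := Iff.rfl
    rw [Set.mem_setOf_eq, hmemiff]
    show ((revDFA M).eval w M.start ≠ (revDFA N).eval w N.start) ↔ _
    cases hb1 : (revDFA M).eval w M.start <;> cases hb2 : (revDFA N).eval w N.start <;>
      rw [hb1] at hA <;> rw [hb2] at hB <;> simp at hA hB ⊢ <;> tauto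
  have hDacc : (quotD M N).accepts = lsymm (rev K) (rev L) :=
    (quotD_accepts M N).trans hfull
  have e1 : {p : (Fin m → Bool) × (Fin n → Bool) // p.1 M.start = false} ≃
      ({x : Fin m // x ≠ M.start} → Bool) × (Fin n → Bool) :=
    { toFun := fun s => (fun x => s.val.1 x.val, s.val.2)
      invFun := fun p => ⟨(fun q => if h : q = M.start then false else p.1 ⟨q, h⟩, p.2), by simp⟩
      left_inv := fun s => by
        apply Subtype.ext
        apply Prod.ext
        · funext q
          dsimp only
          split
          · next h => rw [h]; exact s.prop.symm
          · rfl
        · rfl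
      right_inv := fun p => by
        apply Prod.ext
        · funext x
          dsimp only
          rw [dif_neg x.prop]
        · rfl }
  have hsub : Fintype.card {x : Fin m // x ≠ M.start} = m - 1 := by
    have := Fintype.card_subtype_compl (fun x : Fin m => x = M.start)
    simp only [Fintype.card_subtype_eq, Fintype.card_fin] at this
    convert this using 2
  have hcard : Fintype.card {p : (Fin m → Bool) × (Fin n → Bool) // p.1 M.start = false}
      = 2 ^ (m + n - 1) := by
    rw [Fintype.card_congr e1, Fintype.card_prod, Fintype.card_fun, Fintype.card_fun,
      hsub, Fintype.card_fin, Fintype.card_bool, ← pow_add]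
    congr 1
    have : 0 < m := M.start.pos
    omega
  have hmem : (2 : ℕ) ^ (m + n - 1) ∈ complexitySet (lsymm (rev K) (rev L)) := by
    refine ⟨reindexDFA (Fintype.equivFinOfCardEq hcard) (quotD M N), ?_⟩
    rw [reindexDFA_accepts, hDacc]
  exact Nat.sInf_le hmem
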